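/- Let K be a field, let a be a positive integer, let r ≥ 1, and for j = 1,…,r let I_j ⊂ K[x,y] be the monomial ideal whose minimal monomial generators are {x^{ia} y^{b_{i,j}} : i = s_j, …, t_j}, where 0 ≤ s_j ≤ t_j and b_{i,j} > b_{i+1,j} ≥ 0 for s_j ≤ i < t_j. Then μ(I_1 ⋯ I_r) = Σ_{j=1}^r μ(I_j) − (r − 1); in particular, if I ⊂ K[x,y] is a monomial ideal with minimal monomial generators {x^{ia} y^{b_i} : i = s,…,t} (with b_i strictly decreasing in i), then μ(I^k) = k(t − s) + 1 for all k ≥ 1. -/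

import Mathlib

open MvPolynomial

/-- The minimal number of generators of an ideal. -/
noncomputable def mu {R : Type*} [CommRing R] (I : Ideal R) : ℕ :=
  sInf {m : ℕ | ∃ s : Finset R, s.card = m ∧ Ideal.span (s : Set R) = I}



lemma mu_span_eq {K : Type*} [Field K] {n : ℕ} (d : Fin n → (Fin 2 →₀ ℕ))
    (hd : ∀ i j, d i ≤ d j → i = j) :
    mu (Ideal.span ((fun e => monomial e (1:K)) '' Set.range d)) = n := by
  classical
  set I := Ideal.span ((fun e => monomial e (1:K)) '' Set.range d) with hIdef
  have hinj : Function.Injective fun i => monomial (d i) (1:K) := by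
    intro i j hij
    exact hd i j (le_of_eq (monomial_left_injective (one_ne_zero) hij))
  have hG : ((Finset.univ.image (fun i => monomial (d i) (1:K))) : Set _)
      = (fun e => monomial e (1:K)) '' Set.range d := by
    rw [Finset.coe_image, Finset.coe_univ, Set.image_univ, ← Set.range_comp]
    rfl
  have hmemn : n ∈ {m : ℕ | ∃ s : Finset (MvPolynomial (Fin 2) K),
      s.card = m ∧ Ideal.span (s : Set _) = I} := by
    refine ⟨Finset.univ.image (fun i => monomial (d i) (1:K)), ?_, by rw [hG]⟩
    rw [Finset.card_image_of_injective _ hinj, Finset.card_univ, Fintype.card_fin]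
  refine le_antisymm (Nat.sInf_le hmemn) (le_csInf ⟨n, hmemn⟩ ?_)
  rintro m ⟨F, rfl, hspan⟩
  -- key: for each j, a combination of coefficient-vectors hitting the standard basis
  have key : ∀ j : Fin n, ∃ x : F → K, ∀ j' : Fin n,
      (∑ f ∈ F.attach, x f * coeff (d j') (f : MvPolynomial (Fin 2) K))
        = if j' = j then 1 else 0 := by
    intro j
    have hmem : (monomial (d j) (1:K)) ∈ Ideal.span (F : Set (MvPolynomial (Fin 2) K)) := by
      rw [hspan]
      exact Ideal.subset_span ⟨d j, ⟨j, rfl⟩, rfl⟩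
    obtain ⟨q, -, hq⟩ := Submodule.mem_span_finset.mp hmem
    refine ⟨fun f => coeff 0 (q f), fun j' => ?_⟩
    have hcoeff : ∀ f ∈ F, coeff (d j') (q f * f) = coeff 0 (q f) * coeff (d j') f := by
      intro f hf
      have hfI : ∀ μ ∈ f.support, ∃ e ∈ Set.range d, e ≤ μ := by
        have : f ∈ I := hspan ▸ Ideal.subset_span hf
        rw [hIdef] at this
        exact mem_ideal_span_monomial_image.mp this
      rw [coeff_mul]
      apply Finset.sum_eq_single (0, d j')
      · rintro ⟨ν, μ⟩ hmemd h0
        rw [Finset.HasAntidiagonal.mem_antidiagonal] at hmemd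
        by_cases hμ : coeff μ f = 0
        · simp [hμ]
        · exfalso
          obtain ⟨e, ⟨i, rfl⟩, hle⟩ := hfI μ (mem_support_iff.mpr hμ)
          have h1 : d i ≤ d j' := hle.trans (hmemd ▸ le_add_self)
          have h2 : i = j' := hd i j' h1
          subst h2
          have hμeq : μ = d i := le_antisymm (hmemd ▸ le_add_self) hle
          apply h0
          have hν : ν = 0 := by
            have : ν + μ = 0 + μ := by rw [zero_add, hmemd, hμeq]
            exact add_right_cancel this
          rw [Prod.ext_iff]
          exact ⟨hν, hμeq⟩
      · intro h
        exact absurd (Finset.HasAntidiagonal.mem_antidiagonal.mpr (zero_add _)) h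
    have hsum : (∑ f ∈ F, coeff (d j') (q f * f)) = coeff (d j') (monomial (d j) (1:K)) := by
      rw [← hq, coeff_sum]
      exact Finset.sum_congr rfl fun f hf => by rw [smul_eq_mul]
    rw [Finset.sum_congr rfl (fun f hf => hcoeff f hf)] at hsum
    rw [← Finset.sum_attach F (fun f => coeff 0 (q f) * coeff (d j') f)] at hsum
    rw [show (∑ f ∈ F.attach, (fun f => coeff 0 (q f)) ↑f * coeff (d j') (f : MvPolynomial (Fin 2) K)) = ∑ x ∈ F.attach, coeff 0 (q ↑x) * coeff (d j') ↑x from rfl, hsum, coeff_monomial]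
    by_cases h : j' = j
    · subst h; simp
    · rw [if_neg h, if_neg (fun hdd => h (hd j' j (le_of_eq hdd.symm)))]
  choose x hx using key
  -- surjective linear map (F → K) → (Fin n → K)
  let Φ : (F → K) →ₗ[K] (Fin n → K) :=
    { toFun := fun v j => ∑ f ∈ F.attach, v f * coeff (d j) (f : MvPolynomial (Fin 2) K)
      map_add' := by
        intro v w
        funext j
        simp [add_mul, Finset.sum_add_distrib]
      map_smul' := by
        intro c v
        funext j
        simp [Finset.mul_sum, mul_assoc] }
  have hsurj : Function.Surjective Φ := by
    intro v
    refine ⟨fun f => ∑ j, v j * x j f, ?_⟩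
    funext j'
    show (∑ f ∈ F.attach, (∑ j, v j * x j f) * coeff (d j') (f : MvPolynomial (Fin 2) K)) = v j'
    simp_rw [Finset.sum_mul, mul_assoc]
    rw [Finset.sum_comm]
    simp_rw [← Finset.mul_sum, hx]
    simp
  have h1 := LinearMap.finrank_range_le Φ
  rw [LinearMap.range_eq_top.mpr hsurj] at h1
  rw [finrank_top, Module.finrank_fintype_fun_eq_card, Module.finrank_fintype_fun_eq_card,
    Fintype.card_fin, Fintype.card_coe] at h1
  exact h1

noncomputable def D (p q : ℕ) : Fin 2 →₀ ℕ := Finsupp.single 0 p + Finsupp.single 1 q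

lemma X_pow_eq {K : Type*} [Field K] (p q : ℕ) :
    (X 0 : MvPolynomial (Fin 2) K) ^ p * X 1 ^ q = monomial (D p q) 1 := by
  rw [D, X_pow_eq_monomial, X_pow_eq_monomial, monomial_mul, one_mul]

lemma D_le {p q p' q' : ℕ} : D p q ≤ D p' q' ↔ p ≤ p' ∧ q ≤ q' := by
  constructor
  · intro h
    exact ⟨by simpa [D, Finsupp.single_apply] using h 0,
           by simpa [D, Finsupp.single_apply] using h 1⟩
  · rintro ⟨h1, h2⟩
    rw [Finsupp.le_def]
    intro i
    fin_cases i <;> simpa [D, Finsupp.single_apply]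

lemma D_add (p q p' q' : ℕ) : D p q + D p' q' = D (p + p') (q + q') := by
  simp only [D, Finsupp.single_add]
  abel

def IsStaircase {K : Type*} [Field K] (a : ℕ) (J : Ideal (MvPolynomial (Fin 2) K))
    (s t : ℕ) : Prop :=
  ∃ b : ℕ → ℕ, (∀ i, s ≤ i → i < t → b (i+1) < b i) ∧
    J = Ideal.span ((fun e => monomial e (1:K)) '' ((fun i => D (i*a) (b i)) '' Set.Icc s t))

lemma b_strict {b : ℕ → ℕ} {s t : ℕ} (hb : ∀ i, s ≤ i → i < t → b (i+1) < b i) :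
    ∀ u v : ℕ, s ≤ u → u < v → v ≤ t → b v < b u := by
  intro u v hu huv hvt
  induction v with
  | zero => omega
  | succ w ih =>
    rcases Nat.lt_or_ge u w with h | h
    · exact lt_trans (hb w (by omega) (by omega)) (ih (by omega) (by omega))
    · have : u = w := by omega
      subst this
      exact hb u hu (by omega)

lemma monomial_mem_span_of_le {K : Type*} [Field K] {e e' : Fin 2 →₀ ℕ}
    {A : Set (Fin 2 →₀ ℕ)} (he : e ∈ A) (h : e ≤ e') :
    monomial e' (1:K) ∈ Ideal.span ((fun e => monomial e (1:K)) '' A) := by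
  have heq : monomial e' (1:K) = monomial (e' - e) 1 * monomial e 1 := by
    rw [monomial_mul, one_mul, tsub_add_cancel_of_le h]
  rw [heq]
  exact Ideal.mul_mem_left _ _ (Ideal.subset_span ⟨e, he, rfl⟩)

lemma staircase_one {K : Type*} [Field K] (a : ℕ) :
    IsStaircase a (1 : Ideal (MvPolynomial (Fin 2) K)) 0 0 := by
  refine ⟨fun _ => 0, fun i h1 h2 => absurd h2 (by omega), ?_⟩
  rw [Set.Icc_self, Set.image_singleton, Set.image_singleton]
  have : D (0 * a) 0 = 0 := by simp [D]
  rw [this]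
  have : monomial (0 : Fin 2 →₀ ℕ) (1:K) = 1 := by simp
  rw [this, Ideal.span_singleton_one, Ideal.one_eq_top]

lemma staircase_mul {K : Type*} [Field K] (a : ℕ) {J J' : Ideal (MvPolynomial (Fin 2) K)}
    {s t s' t' : ℕ} (hst : s ≤ t) (hst' : s' ≤ t')
    (h : IsStaircase a J s t) (h' : IsStaircase a J' s' t') :
    IsStaircase a (J * J') (s + s') (t + t') := by
  obtain ⟨b, hb, rfl⟩ := h
  obtain ⟨c, hc, rfl⟩ := h'
  set S : ℕ → Set ℕ := fun I => (fun p : ℕ × ℕ => b p.1 + c p.2) ''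
    {p : ℕ × ℕ | p.1 ∈ Set.Icc s t ∧ p.2 ∈ Set.Icc s' t' ∧ p.1 + p.2 = I} with hS
  set B : ℕ → ℕ := fun I => sInf (S I) with hBdef
  have hne : ∀ I, s + s' ≤ I → I ≤ t + t' → (S I).Nonempty := by
    intro I h1 h2
    exact ⟨b (min t (I - s')) + c (I - min t (I - s')),
      ⟨(min t (I - s'), I - min t (I - s')),
        ⟨Set.mem_Icc.mpr (by omega), Set.mem_Icc.mpr (by omega), by omega⟩, rfl⟩⟩
  have hBle : ∀ i i', s ≤ i → i ≤ t → s' ≤ i' → i' ≤ t' → B (i + i') ≤ b i + c i' := by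
    intro i i' h1 h2 h3 h4
    exact Nat.sInf_le ⟨(i, i'), ⟨Set.mem_Icc.mpr ⟨h1, h2⟩, Set.mem_Icc.mpr ⟨h3, h4⟩, rfl⟩, rfl⟩
  have hBmem : ∀ I, s + s' ≤ I → I ≤ t + t' → ∃ i i', s ≤ i ∧ i ≤ t ∧ s' ≤ i' ∧ i' ≤ t' ∧
      i + i' = I ∧ B I = b i + c i' := by
    intro I h1 h2
    obtain ⟨⟨i, i'⟩, ⟨hi, hi', hsum⟩, hval⟩ := Nat.sInf_mem (hne I h1 h2)
    rw [Set.mem_Icc] at hi hi'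
    exact ⟨i, i', hi.1, hi.2, hi'.1, hi'.2, hsum, hval.symm⟩
  refine ⟨B, ?_, ?_⟩
  · intro I hI1 hI2
    obtain ⟨i, i', h1, h2, h3, h4, h5, h6⟩ := hBmem I hI1 (by omega)
    rcases Nat.lt_or_ge i t with hlt | hge
    · calc B (I + 1) ≤ b (i+1) + c i' := by
            have := hBle (i+1) i' (by omega) (by omega) h3 h4
            rwa [show i + 1 + i' = I + 1 by omega] at this
        _ < b i + c i' := by have := hb i h1 hlt; omega
        _ = B I := h6.symm
    · have hlt' : i' < t' := by omega
      calc B (I + 1) ≤ b i + c (i'+1) := by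
            have := hBle i (i'+1) h1 h2 (by omega) (by omega)
            rwa [show i + (i' + 1) = I + 1 by omega] at this
        _ < b i + c i' := by have := hc i' h3 hlt'; omega
        _ = B I := h6.symm
  · rw [Ideal.span_mul_span']
    apply le_antisymm
    · rw [Ideal.span_le]
      rintro x hx
      rw [Set.mem_mul] at hx
      obtain ⟨y, ⟨e1, ⟨i, hi, rfl⟩, rfl⟩, z, ⟨e2, ⟨i', hi', rfl⟩, rfl⟩, rfl⟩ := hx
      rw [Set.mem_Icc] at hi hi'
      rw [monomial_mul, one_mul, D_add, ← Nat.add_mul]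
      apply monomial_mem_span_of_le (A := (fun i => D (i*a) (B i)) '' Set.Icc (s+s') (t+t'))
        ⟨i + i', Set.mem_Icc.mpr (by omega), rfl⟩
      rw [D_le]
      exact ⟨le_refl _, hBle i i' hi.1 hi.2 hi'.1 hi'.2⟩
    · rw [Ideal.span_le]
      rintro x ⟨e, ⟨I, hI, rfl⟩, rfl⟩
      rw [Set.mem_Icc] at hI
      obtain ⟨i, i', h1, h2, h3, h4, h5, h6⟩ := hBmem I hI.1 hI.2
      show (monomial (D (I * a) (B I)) (1:K)) ∈ _
      have : monomial (D (I * a) (B I)) (1:K)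
          = monomial (D (i*a) (b i)) 1 * monomial (D (i'*a) (c i')) 1 := by
        rw [monomial_mul, one_mul, D_add, ← Nat.add_mul, h5, h6]
      rw [this]
      exact Ideal.subset_span (Set.mul_mem_mul ⟨_, ⟨i, Set.mem_Icc.mpr ⟨h1, h2⟩, rfl⟩, rfl⟩
        ⟨_, ⟨i', Set.mem_Icc.mpr ⟨h3, h4⟩, rfl⟩, rfl⟩)

lemma staircase_pow {K : Type*} [Field K] (a : ℕ) {J : Ideal (MvPolynomial (Fin 2) K)}
    {s t : ℕ} (hst : s ≤ t) (h : IsStaircase a J s t) (k : ℕ) :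
    IsStaircase a (J ^ k) (k * s) (k * t) := by
  induction k with
  | zero => simpa using staircase_one a
  | succ k ih =>
    rw [pow_succ]
    have := staircase_mul a (Nat.mul_le_mul_left k hst) hst ih h
    rwa [show k * s + s = (k+1) * s by ring, show k * t + t = (k+1) * t by ring] at this

lemma staircase_prod {K : Type*} [Field K] (a : ℕ) {r : ℕ}
    (I : Fin r → Ideal (MvPolynomial (Fin 2) K)) (s t : Fin r → ℕ) (hst : ∀ j, s j ≤ t j)
    (h : ∀ j, IsStaircase a (I j) (s j) (t j)) (u : Finset (Fin r)) :
    IsStaircase a (∏ j ∈ u, I j) (∑ j ∈ u, s j) (∑ j ∈ u, t j) := by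
  induction u using Finset.cons_induction with
  | empty => simpa using staircase_one a
  | cons j u hj ih =>
    rw [Finset.prod_cons, Finset.sum_cons, Finset.sum_cons]
    exact staircase_mul a (hst j) (Finset.sum_le_sum fun j' _ => hst j') (h j) ih


lemma mu_staircase {K : Type*} [Field K] {a : ℕ} (ha : 0 < a)
    {J : Ideal (MvPolynomial (Fin 2) K)} {s t : ℕ} (hst : s ≤ t)
    (h : IsStaircase a J s t) : mu J = t - s + 1 := by
  obtain ⟨b, hb, rfl⟩ := h
  have himg : (fun i => D (i*a) (b i)) '' Set.Icc s t
      = Set.range (fun i : Fin (t - s + 1) => D ((s + (i:ℕ))*a) (b (s + (i:ℕ)))) := by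
    ext e
    constructor
    · rintro ⟨i, hi, rfl⟩
      rw [Set.mem_Icc] at hi
      have h' : s + (i - s) = i := by omega
      exact ⟨⟨i - s, by omega⟩, by simp [h']⟩
    · rintro ⟨i, rfl⟩
      exact ⟨s + (i:ℕ), Set.mem_Icc.mpr ⟨by omega, by have := i.isLt; omega⟩, rfl⟩
  rw [himg, mu_span_eq]
  intro i j hle
  rw [D_le] at hle
  have hx : s + (i:ℕ) ≤ s + (j:ℕ) := by
    have := Nat.le_of_mul_le_mul_right hle.1 ha
    omega
  by_contra hne
  have hij : (i:ℕ) < (j:ℕ) := by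
    rcases lt_or_ge (i:ℕ) (j:ℕ) with h' | h'
    · exact h'
    · exact absurd (Fin.ext (by omega : (i:ℕ) = j)) hne
  have := b_strict hb (s + (i:ℕ)) (s + (j:ℕ)) (by omega) (by omega) (by have := j.isLt; omega)
  omega

lemma span_image_eq {K : Type*} [Field K] (a : ℕ) (b : ℕ → ℕ) (s t : ℕ) :
    ((fun i => (X 0 : MvPolynomial (Fin 2) K) ^ (i * a) * X 1 ^ (b i)) '' Set.Icc s t)
      = (fun e => monomial e (1:K)) '' ((fun i => D (i*a) (b i)) '' Set.Icc s t) := by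
  rw [Set.image_image]
  exact Set.image_congr' (fun i => X_pow_eq (i*a) (b i))

/-- Theorem 4.4 and Corollary 4.5: let `a > 0` and for `j = 1,…,r` let `I_j ⊂ K[x,y]` be the
monomial ideal minimally generated by `{x^{ia} y^{b_{i,j}} : i = s_j,…,t_j}`, where `b_{i,j}`
is strictly decreasing in `i`. Then `μ(I₁ ⋯ I_r) = Σ μ(I_j) - (r-1)`; in particular, for a
single such ideal `L` one has `μ(L^k) = k(t-s) + 1` for all `k ≥ 1`. -/
theorem numGen_prod_of_arithmetic_x_exponents {K : Type*} [Field K]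
    (a : ℕ) (ha : 0 < a) {r : ℕ} (hr : 0 < r)
    (s t : Fin r → ℕ) (b : ℕ → Fin r → ℕ)
    (hst : ∀ j, s j ≤ t j)
    (hb : ∀ j, ∀ i, s j ≤ i → i < t j → b (i + 1) j < b i j)
    (I : Fin r → Ideal (MvPolynomial (Fin 2) K))
    (hI : ∀ j, I j = Ideal.span
      ((fun i => (X 0 : MvPolynomial (Fin 2) K) ^ (i * a) * X 1 ^ (b i j)) '' Set.Icc (s j) (t j))) :
    mu (∏ j, I j) = (∑ j, mu (I j)) - (r - 1) ∧
    (∀ (L : Ideal (MvPolynomial (Fin 2) K)) (s' t' : ℕ) (c : ℕ → ℕ),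
      s' ≤ t' → (∀ i, s' ≤ i → i < t' → c (i + 1) < c i) →
      L = Ideal.span
        ((fun i => (X 0 : MvPolynomial (Fin 2) K) ^ (i * a) * X 1 ^ (c i)) '' Set.Icc s' t') →
      ∀ k : ℕ, 1 ≤ k → mu (L ^ k) = k * (t' - s') + 1) := by
  have hstair : ∀ j, IsStaircase a (I j) (s j) (t j) := by
    intro j
    refine ⟨fun i => b i j, hb j, ?_⟩
    rw [hI j, span_image_eq]
  constructor
  · have h1 := staircase_prod a I s t hst hstair Finset.univ
    have hS : (∑ j, s j) ≤ ∑ j, t j := Finset.sum_le_sum fun j _ => hst j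
    have e1 := mu_staircase ha hS h1
    have e2 : ∀ j, mu (I j) = t j - s j + 1 := fun j => mu_staircase ha (hst j) (hstair j)
    have e3 : (∑ j, t j) = (∑ j, s j) + ∑ j, (t j - s j) := by
      rw [← Finset.sum_add_distrib]
      exact Finset.sum_congr rfl fun j _ => by have := hst j; omega
    have e4 : (∑ j, mu (I j)) = (∑ j, (t j - s j)) + r := by
      calc (∑ j, mu (I j)) = ∑ j, (t j - s j + 1) := Finset.sum_congr rfl fun j _ => e2 j
        _ = (∑ j, (t j - s j)) + r := by
          rw [Finset.sum_add_distrib]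
          simp
    rw [e1, e4]
    omega
  · intro L s' t' c hst' hc hL k hk
    have hstairL : IsStaircase a L s' t' := ⟨c, hc, by rw [hL, span_image_eq]⟩
    have h2 := staircase_pow a hst' hstairL k
    have e := mu_staircase ha (Nat.mul_le_mul_left k hst') h2
    obtain ⟨u, rfl⟩ := Nat.exists_eq_add_of_le hst'
    rw [e, show k*(s'+u) = k*s' + k*u from by ring, Nat.add_sub_cancel_left,
      show s' + u - s' = u from by omega]
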